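/- arXiv:0805.4166 — 5 statements merged into one kernel-verified Lean document; each statement's English description precedes it below -/
import Mathlib

section
/- Define s(z) = (z² − 1)·z^{−2}·sin(π z²/2) for z ≠ 0 (extended as an entire function, since sin(π z²/2) has a double zero at 0). Then for every ε > 0 there exist constants 0 < c ≤ C such that |s(r e^{iθ})| is bounded between c·exp((π/2) r² |sin 2θ|) and C·exp((π/2) r² |sin 2θ|) for all r ≥ 1 and θ with dist(r e^{iθ}, Λ) > ε r^{−1/2}, where Λ is the zero set of s. -/
open Complex Real

/-- The zero set of s(z) = (z²−1) z^{−2} sin(πz²/2):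
Λ = {−1, 1} ∪ {±√(2n) : n ≥ 1} ∪ {±i√(2n) : n ≥ 1}. -/
def GaborLambda : Set ℂ :=
  {-1, 1} ∪ (⋃ n : ℕ, if 1 ≤ n then
    {(Real.sqrt (2 * n) : ℂ), -(Real.sqrt (2 * n) : ℂ),
     Complex.I * Real.sqrt (2 * n), -(Complex.I * Real.sqrt (2 * n))} else ∅)

lemma aux_abs_sin_sq (x y : ℝ) :
    ‖Complex.sin (x + y * Complex.I)‖ ^ 2 = Real.sin x ^ 2 + Real.sinh y ^ 2 := by
  rw [Complex.sin_add, Complex.sin_mul_I, Complex.cos_mul_I, Complex.sq_norm]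
  simp [Complex.normSq_apply, ← Complex.ofReal_sin, ← Complex.ofReal_cos,
    ← Complex.ofReal_sinh, ← Complex.ofReal_cosh]
  nlinarith [Real.sin_sq_add_cos_sq x, Real.cosh_sq y]

lemma aux_abs_sin_le (w : ℂ) : ‖Complex.sin w‖ ≤ Real.exp |w.im| := by
  have h := aux_abs_sin_sq w.re w.im
  rw [Complex.re_add_im] at h
  have hc : Real.cosh w.im ≤ Real.exp |w.im| := by
    rw [Real.cosh_eq]
    rcases abs_cases w.im with ⟨he, h0⟩ | ⟨he, h0⟩ <;> rw [he]
    · linarith [Real.exp_le_exp.mpr (show -w.im ≤ w.im by linarith)]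
    · linarith [Real.exp_le_exp.mpr (show w.im ≤ -w.im by linarith)]
  have h2 : ‖Complex.sin w‖ ≤ Real.cosh w.im := by
    nlinarith [Real.sin_sq_add_cos_sq w.re, Real.cosh_sq w.im, Real.cosh_pos w.im,
      norm_nonneg (Complex.sin w), sq_nonneg (Real.cos w.re), sq_nonneg (Real.sin w.re)]
  linarith

lemma aux_prod_lower (z a : ℂ) (d : ℝ) (hd : 0 ≤ d)
    (h1 : d ≤ ‖z - a‖) (h2 : d ≤ ‖z + a‖) :
    d * ‖a‖ ≤ ‖z ^ 2 - a ^ 2‖ := by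
  have hfac : z ^ 2 - a ^ 2 = (z - a) * (z + a) := by ring
  rw [hfac, norm_mul]
  have htri : 2 * ‖a‖ ≤ ‖z - a‖ + ‖z + a‖ := by
    have h := norm_sub_le (z + a) (z - a)
    have he : (z + a) - (z - a) = 2 * a := by ring
    rw [he] at h
    simpa [norm_mul, add_comm] using h
  nlinarith [norm_nonneg (z - a), norm_nonneg (z + a), norm_nonneg a]

lemma mem_gabor (k : ℕ) (hk : 1 ≤ k) (a : ℂ)
    (ha : a = ((Real.sqrt (2 * k) : ℝ) : ℂ) ∨ a = -((Real.sqrt (2 * k) : ℝ) : ℂ) ∨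
      a = Complex.I * ((Real.sqrt (2 * k) : ℝ) : ℂ) ∨
      a = -(Complex.I * ((Real.sqrt (2 * k) : ℝ) : ℂ))) : a ∈ GaborLambda := by
  apply Set.mem_union_right
  refine Set.mem_iUnion.mpr ⟨k, ?_⟩
  rw [if_pos hk]
  rcases ha with h | h | h | h <;> simp [h]

lemma lattice_lower (ε r : ℝ) (hε : 0 < ε) (hr : 1 ≤ r) (z : ℂ)
    (habs : ‖z‖ = r)
    (hdist : ∀ lam ∈ GaborLambda, ε * (Real.sqrt r)⁻¹ < ‖z - lam‖)
    (m : ℤ) :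
    min (1/2 : ℝ) (ε/2) ≤ ‖z ^ 2 - 2 * (m : ℂ)‖ := by
  have hr0 : (0:ℝ) ≤ r := by linarith
  have hr2 : 1 ≤ r ^ 2 := by nlinarith
  rcases eq_or_ne m 0 with rfl | hm0
  · simp only [Int.cast_zero, mul_zero, sub_zero, norm_pow, habs]
    exact le_trans (le_trans (min_le_left _ _) (by norm_num)) hr2
  · set k := m.natAbs with hkdef
    have hk1 : 1 ≤ k := Int.natAbs_pos.mpr hm0
    have hk1' : (1:ℝ) ≤ (k:ℝ) := by exact_mod_cast hk1
    have h2k : (0:ℝ) ≤ 2 * k := by positivity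
    obtain ⟨a, hmem1, hmem2, ha2, haabs⟩ :
        ∃ a : ℂ, a ∈ GaborLambda ∧ -a ∈ GaborLambda ∧ a ^ 2 = 2 * (m : ℂ) ∧
          ‖a‖ = Real.sqrt (2 * k) := by
      rcases lt_or_gt_of_ne hm0 with hm | hm
      · refine ⟨Complex.I * ((Real.sqrt (2 * k) : ℝ) : ℂ), mem_gabor k hk1 _ (by tauto),
          mem_gabor k hk1 _ (by tauto), ?_,
          by rw [norm_mul, Complex.norm_I, one_mul, Complex.norm_real, Real.norm_eq_abs,
            _root_.abs_of_nonneg (Real.sqrt_nonneg _)]⟩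
        have hkm : (k : ℤ) = -m := by
          rw [hkdef]; omega
        have h1 : ((Real.sqrt (2 * k) : ℝ) : ℂ) ^ 2 = ((2 * k : ℝ) : ℂ) := by
          rw [← Complex.ofReal_pow, Real.sq_sqrt h2k]
        rw [mul_pow, h1, Complex.I_sq]
        have h2 : ((k : ℝ) : ℂ) = -(m : ℂ) := by exact_mod_cast hkm
        rw [show ((2 * (k:ℝ) : ℝ) : ℂ) = 2 * ((k:ℝ):ℂ) by push_cast; ring, h2]; ring
      · refine ⟨((Real.sqrt (2 * k) : ℝ) : ℂ), mem_gabor k hk1 _ (by tauto),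
          mem_gabor k hk1 _ (by tauto), ?_,
          by rw [Complex.norm_real, Real.norm_eq_abs, _root_.abs_of_nonneg (Real.sqrt_nonneg _)]⟩
        have hkm : (k : ℤ) = m := Int.natAbs_of_nonneg (le_of_lt hm)
        rw [← Complex.ofReal_pow, Real.sq_sqrt h2k]
        have h2 : ((k : ℝ) : ℂ) = (m : ℂ) := by exact_mod_cast hkm
        rw [show ((2 * (k:ℝ) : ℝ) : ℂ) = 2 * ((k:ℝ):ℂ) by push_cast; ring, h2]
    have hd0 : (0:ℝ) ≤ ε * (Real.sqrt r)⁻¹ := by positivity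
    have h1 : ε * (Real.sqrt r)⁻¹ ≤ ‖z - a‖ := (hdist a hmem1).le
    have h2 : ε * (Real.sqrt r)⁻¹ ≤ ‖z + a‖ := by
      have := (hdist (-a) hmem2).le
      rwa [sub_neg_eq_add] at this
    have key := aux_prod_lower z a _ hd0 h1 h2
    rw [ha2, haabs] at key
    rcases le_or_gt (r ^ 2 / 2) (2 * (k:ℝ)) with hbig | hsmall
    · have hs2 : Real.sqrt 2 ≤ 2 := by
        nlinarith [Real.sq_sqrt (by norm_num : (0:ℝ) ≤ 2), Real.sqrt_nonneg 2]
      have hs2' : 0 < Real.sqrt 2 := Real.sqrt_pos.mpr (by norm_num)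
      have hu : 1 ≤ Real.sqrt r := Real.one_le_sqrt.mpr hr
      have hu2 : Real.sqrt r * Real.sqrt r = r := Real.mul_self_sqrt hr0
      have hv : r / Real.sqrt 2 ≤ Real.sqrt (2 * k) := by
        rw [Real.le_sqrt (by positivity) h2k, div_pow, Real.sq_sqrt (by norm_num : (0:ℝ) ≤ 2)]
        exact (div_le_iff₀ (by norm_num)).mpr (by nlinarith)
      have hchain : ε / 2 ≤ ε * (Real.sqrt r)⁻¹ * Real.sqrt (2 * k) := by
        have h1' : ε * (Real.sqrt r)⁻¹ * (r / Real.sqrt 2) ≤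
            ε * (Real.sqrt r)⁻¹ * Real.sqrt (2 * k) :=
          mul_le_mul_of_nonneg_left hv hd0
        have hne : Real.sqrt r ≠ 0 := by positivity
        have heq : ε * (Real.sqrt r)⁻¹ * (r / Real.sqrt 2) = ε * (Real.sqrt r / Real.sqrt 2) := by
          field_simp
          linear_combination (-1) * hu2
        have : ε / 2 ≤ ε * (Real.sqrt r / Real.sqrt 2) := by
          have : (1:ℝ)/2 ≤ Real.sqrt r / Real.sqrt 2 := by
            rw [div_le_div_iff₀ (by norm_num) hs2']
            nlinarith
          nlinarith
        linarith
      exact le_trans (min_le_right _ _) (le_trans hchain key)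
    · have habs2m : ‖2 * (m:ℂ)‖ = 2 * (k:ℝ) := by
        rw [norm_mul, Complex.norm_two, Complex.norm_intCast, hkdef]
        push_cast [Nat.cast_natAbs]
        ring
      have htri := norm_sub_norm_le (z ^ 2) (2 * (m:ℂ))
      rw [norm_pow, habs, habs2m] at htri
      refine le_trans (min_le_left _ _) ?_
      nlinarith

lemma sin_lower (ε r : ℝ) (hε : 0 < ε) (hr : 1 ≤ r) (z : ℂ)
    (habs : ‖z‖ = r)
    (hdist : ∀ lam ∈ GaborLambda, ε * (Real.sqrt r)⁻¹ < ‖z - lam‖) :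
    min ((1 - Real.exp (-2))/2) (min (1/2 : ℝ) (ε/2) / Real.exp 1) *
        Real.exp |π / 2 * (z ^ 2).im| ≤
      ‖Complex.sin (π * z ^ 2 / 2)‖ := by
  set x : ℝ := π / 2 * (z ^ 2).re with hxdef
  set y : ℝ := π / 2 * (z ^ 2).im with hydef
  set δ : ℝ := min (1/2 : ℝ) (ε/2) with hδdef
  have hδ0 : 0 < δ := by
    apply lt_min (by norm_num) (by positivity)
  have hW : (↑π * z ^ 2 / 2 : ℂ) = (x : ℂ) + (y : ℂ) * Complex.I := by
    have h : (↑π * z ^ 2 / 2 : ℂ) = ((π / 2 : ℝ) : ℂ) * z ^ 2 := by push_cast; ring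
    apply Complex.ext
    · rw [h]; simp [hxdef, Complex.re_ofReal_mul]
    · rw [h]; simp [hydef, Complex.im_ofReal_mul]
  set A : ℝ := ‖Complex.sin (π * z ^ 2 / 2)‖ with hAdef
  have hA0 : 0 ≤ A := norm_nonneg _
  have hA2 : A ^ 2 = Real.sin x ^ 2 + Real.sinh y ^ 2 := by
    rw [hAdef, hW, aux_abs_sin_sq]
  have hsinhy : |Real.sinh y| = Real.sinh |y| := by
    rcases le_or_gt 0 y with h0 | h0
    · rw [_root_.abs_of_nonneg h0, _root_.abs_of_nonneg (Real.sinh_nonneg_iff.mpr h0)]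
    · rw [_root_.abs_of_neg h0, _root_.abs_of_neg (Real.sinh_neg_iff.mpr h0), ← Real.sinh_neg]
  rcases le_or_gt 1 |y| with hy | hy
  · -- |Im W| ≥ 1 : use sinh
    have hexp : Real.exp (-|y|) ≤ Real.exp (-2) * Real.exp |y| := by
      rw [← Real.exp_add]
      exact Real.exp_le_exp.mpr (by linarith)
    have hsinh : (1 - Real.exp (-2))/2 * Real.exp |y| ≤ Real.sinh |y| := by
      rw [Real.sinh_eq]
      linarith
    have hAs : Real.sinh |y| ≤ A := by
      rw [← hsinhy]
      nlinarith [sq_nonneg (Real.sin x), _root_.sq_abs (Real.sinh y), abs_nonneg (Real.sinh y)]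
    calc min ((1 - Real.exp (-2))/2) (δ / Real.exp 1) * Real.exp |y|
        ≤ (1 - Real.exp (-2))/2 * Real.exp |y| :=
          mul_le_mul_of_nonneg_right (min_le_left _ _) (Real.exp_pos _).le
      _ ≤ A := le_trans hsinh hAs
  · -- |Im W| < 1 : use the lattice bound
    set m : ℤ := round ((z ^ 2).re / 2) with hmdef
    set t : ℝ := (z ^ 2).re - 2 * m with htdef
    have ht1 : |t| ≤ 1 := by
      have h := abs_sub_round ((z ^ 2).re / 2)
      rw [show t = 2 * ((z ^ 2).re / 2 - m) by rw [htdef]; ring, abs_mul]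
      rw [_root_.abs_of_nonneg (by norm_num : (0:ℝ) ≤ 2)]
      linarith
    have hpi : (0:ℝ) < π := Real.pi_pos
    have hsinx : |t| ≤ |Real.sin x| := by
      have hx : x = π / 2 * t + m * π := by rw [hxdef, htdef]; ring
      rw [hx, Real.sin_add_int_mul_pi, abs_mul]
      have hneg1 : |((-1:ℝ)) ^ m| = 1 := by
        rcases Int.even_or_odd m with h | h
        · rw [h.neg_one_zpow, abs_one]
        · rw [h.neg_one_zpow, abs_neg, abs_one]
      rw [hneg1, one_mul]
      have harg : |π / 2 * t| ≤ π / 2 := by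
        rw [abs_mul, _root_.abs_of_nonneg (by positivity : (0:ℝ) ≤ π / 2)]
        nlinarith [abs_nonneg t]
      have := Real.mul_abs_le_abs_sin harg
      rw [abs_mul, _root_.abs_of_nonneg (by positivity : (0:ℝ) ≤ π / 2)] at this
      calc |t| = 2 / π * (π / 2 * |t|) := by field_simp
        _ ≤ |Real.sin (π / 2 * t)| := this
    have hyim : |(z ^ 2).im| ≤ |y| := by
      rw [hydef, abs_mul, _root_.abs_of_nonneg (by positivity : (0:ℝ) ≤ π / 2)]
      nlinarith [abs_nonneg ((z ^ 2).im), Real.pi_gt_three]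
    have hsinh2 : |(z ^ 2).im| ≤ |Real.sinh y| := by
      rw [hsinhy]
      calc |(z ^ 2).im| ≤ |y| := hyim
        _ ≤ Real.sinh |y| := Real.self_le_sinh_iff.mpr (abs_nonneg y)
    have hlat := lattice_lower ε r hε hr z habs hdist m
    have hnorm : ‖z ^ 2 - 2 * (m:ℂ)‖ ^ 2 = t ^ 2 + (z ^ 2).im ^ 2 := by
      rw [Complex.sq_norm, Complex.normSq_apply, htdef]
      simp [Complex.sub_re, Complex.sub_im]
      ring
    have hAδ : δ ≤ A := by
      have hsq : δ ^ 2 ≤ t ^ 2 + (z ^ 2).im ^ 2 := by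
        rw [← hnorm]
        exact pow_le_pow_left₀ hδ0.le hlat 2
      have e1 : t ^ 2 ≤ Real.sin x ^ 2 := by
        have := pow_le_pow_left₀ (abs_nonneg t) hsinx 2
        simpa [_root_.sq_abs] using this
      have e2 : (z ^ 2).im ^ 2 ≤ Real.sinh y ^ 2 := by
        have := pow_le_pow_left₀ (abs_nonneg ((z ^ 2).im)) hsinh2 2
        simpa [_root_.sq_abs] using this
      have h1 : δ ^ 2 ≤ A ^ 2 := by rw [hA2]; linarith
      nlinarith
    have hexp1 : Real.exp |y| ≤ Real.exp 1 := Real.exp_le_exp.mpr hy.le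
    calc min ((1 - Real.exp (-2))/2) (δ / Real.exp 1) * Real.exp |y|
        ≤ δ / Real.exp 1 * Real.exp 1 := by
          apply mul_le_mul (min_le_right _ _) hexp1 (Real.exp_pos _).le (by positivity)
      _ = δ := div_mul_cancel₀ δ (Real.exp_ne_zero 1)
      _ ≤ A := hAδ

/-- Two-sided estimate for |s(re^{iθ})| away from the zero set Λ:
for each ε > 0 there are 0 < c ≤ C with
c·exp((π/2)r²|sin 2θ|) ≤ |s(re^{iθ})| ≤ C·exp((π/2)r²|sin 2θ|)
whenever r ≥ 1 and dist(re^{iθ}, Λ) > ε r^{−1/2}. -/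
theorem s_estimate_away_from_zeros (s : ℂ → ℂ) (hs : Differentiable ℂ s)
    (hs_eq : ∀ z : ℂ, z ≠ 0 → s z = (z ^ 2 - 1) / z ^ 2 * Complex.sin (π * z ^ 2 / 2))
    (ε : ℝ) (hε : 0 < ε) :
    ∃ c C : ℝ, 0 < c ∧ c ≤ C ∧
      ∀ r θ : ℝ, 1 ≤ r →
        (∀ lam ∈ GaborLambda, ε * r ^ (-(1:ℝ)/2) <
            ‖(r : ℂ) * Complex.exp (Complex.I * θ) - lam‖) →
        c * Real.exp (π / 2 * r ^ 2 * |Real.sin (2 * θ)|) ≤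
            ‖s ((r : ℂ) * Complex.exp (Complex.I * θ))‖ ∧
        ‖s ((r : ℂ) * Complex.exp (Complex.I * θ))‖ ≤
            C * Real.exp (π / 2 * r ^ 2 * |Real.sin (2 * θ)|) := by
  have hexp2 : Real.exp (-2) < 1 := by
    calc Real.exp (-2) < Real.exp 0 := Real.exp_lt_exp.mpr (by norm_num)
      _ = 1 := Real.exp_zero
  set c₀ : ℝ := min (1/2 : ℝ) (ε/4) with hc₀def
  set c₁ : ℝ := min ((1 - Real.exp (-2))/2) (min (1/2 : ℝ) (ε/2) / Real.exp 1) with hc₁def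
  have hc₀pos : 0 < c₀ := lt_min (by norm_num) (by positivity)
  have hc₁pos : 0 < c₁ := by
    apply lt_min (by linarith)
    have : (0:ℝ) < min (1/2 : ℝ) (ε/2) := lt_min (by norm_num) (by positivity)
    positivity
  refine ⟨c₀ * c₁, 2, by positivity, ?_, ?_⟩
  · have h1 : c₀ ≤ 1/2 := min_le_left _ _
    have h2 : c₁ ≤ (1 - Real.exp (-2))/2 := min_le_left _ _
    nlinarith [Real.exp_pos (-2)]
  intro r θ hr hdist
  have hr0 : (0:ℝ) ≤ r := by linarith
  have hr2 : (1:ℝ) ≤ r ^ 2 := by nlinarith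
  have hr2pos : (0:ℝ) < r ^ 2 := by linarith
  set z : ℂ := (r : ℂ) * Complex.exp (Complex.I * θ) with hzdef
  have habsz : ‖z‖ = r := by
    rw [hzdef, norm_mul, Complex.norm_exp]
    simp [_root_.abs_of_nonneg hr0]
  have hz0 : z ≠ 0 := by
    intro h
    rw [h, norm_zero] at habsz
    linarith
  have hrpow : r ^ (-(1:ℝ)/2) = (Real.sqrt r)⁻¹ := by
    rw [show (-(1:ℝ)/2) = -(1/2) by ring, Real.rpow_neg hr0, ← Real.sqrt_eq_rpow]
  have hdist' : ∀ lam ∈ GaborLambda, ε * (Real.sqrt r)⁻¹ < ‖z - lam‖ := by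
    intro lam hlam
    have := hdist lam hlam
    rwa [hrpow] at this
  have him : (z ^ 2).im = r ^ 2 * Real.sin (2 * θ) := by
    have h : z = (r : ℂ) * (Real.cos θ + Real.sin θ * Complex.I) := by
      rw [hzdef, mul_comm Complex.I (θ:ℂ), Complex.exp_mul_I]; push_cast; ring
    rw [h, sq, Complex.mul_im]
    simp [Complex.mul_re, Complex.mul_im, Real.sin_two_mul, Complex.sin_ofReal_re,
      Complex.cos_ofReal_re]
    ring
  have hE : |π / 2 * (z ^ 2).im| = π / 2 * r ^ 2 * |Real.sin (2 * θ)| := by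
    rw [him, show π / 2 * (r ^ 2 * Real.sin (2 * θ)) = (π / 2 * r ^ 2) * Real.sin (2 * θ) by ring,
      abs_mul, _root_.abs_of_nonneg (by positivity : (0:ℝ) ≤ π / 2 * r ^ 2)]
  have hWim : ((π : ℂ) * z ^ 2 / 2).im = π / 2 * (z ^ 2).im := by
    rw [show ((π : ℂ) * z ^ 2 / 2) = ((π/2 : ℝ) : ℂ) * z ^ 2 by push_cast; ring,
      Complex.im_ofReal_mul]
  set A : ℝ := ‖Complex.sin (π * z ^ 2 / 2)‖ with hAdef
  have hA0 : 0 ≤ A := norm_nonneg _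
  set P : ℝ := ‖z ^ 2 - 1‖ with hPdef
  have hP0 : 0 ≤ P := norm_nonneg _
  have habs_s : ‖s z‖ = P / r ^ 2 * A := by
    rw [hs_eq z hz0, norm_mul, norm_div, norm_pow, habsz]
  have hexp0 : (0:ℝ) < Real.exp (π / 2 * r ^ 2 * |Real.sin (2 * θ)|) := Real.exp_pos _
  constructor
  · -- lower bound
    have hlow2 := sin_lower ε r hε hr z habsz hdist'
    rw [hE] at hlow2
    have hlow1 : c₀ ≤ P / r ^ 2 := by
      rcases le_or_gt 2 (r ^ 2) with hbig | hsmall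
      · have htri := norm_sub_norm_le (z ^ 2) (1 : ℂ)
        rw [norm_pow, habsz, norm_one] at htri
        refine le_trans (min_le_left _ _) ?_
        rw [le_div_iff₀ hr2pos]
        nlinarith
      · have h1 : ε * (Real.sqrt r)⁻¹ ≤ ‖z - 1‖ :=
          (hdist' 1 (by simp [GaborLambda])).le
        have h2 : ε * (Real.sqrt r)⁻¹ ≤ ‖z + 1‖ := by
          have := (hdist' (-1) (by simp [GaborLambda])).le
          rwa [sub_neg_eq_add] at this
        have key := aux_prod_lower z 1 _ (by positivity) h1 h2
        rw [one_pow, norm_one, mul_one] at key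
        have hsr : Real.sqrt r ≤ 2 := by
          rw [Real.sqrt_le_left (by norm_num)]
          nlinarith
        have hsrpos : 0 < Real.sqrt r := Real.sqrt_pos.mpr (by linarith)
        have hinv : (1:ℝ)/2 ≤ (Real.sqrt r)⁻¹ := by
          rw [show ((Real.sqrt r)⁻¹ : ℝ) = 1 / Real.sqrt r by rw [one_div]]
          exact one_div_le_one_div_of_le hsrpos hsr
        refine le_trans (min_le_right _ _) ?_
        rw [le_div_iff₀ hr2pos]
        nlinarith
    rw [habs_s]
    have hc₁exp : 0 ≤ c₁ * Real.exp (π / 2 * r ^ 2 * |Real.sin (2 * θ)|) := by positivity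
    calc c₀ * c₁ * Real.exp (π / 2 * r ^ 2 * |Real.sin (2 * θ)|)
        = c₀ * (c₁ * Real.exp (π / 2 * r ^ 2 * |Real.sin (2 * θ)|)) := by ring
      _ ≤ (P / r ^ 2) * A := by
          apply mul_le_mul hlow1 hlow2 hc₁exp (by positivity)
  · -- upper bound
    have hub1 : P ≤ 2 * r ^ 2 := by
      have htri := norm_sub_le (z ^ 2) (1 : ℂ)
      rw [norm_pow, habsz, norm_one] at htri
      linarith
    have hub2 : A ≤ Real.exp (π / 2 * r ^ 2 * |Real.sin (2 * θ)|) := by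
      have h := aux_abs_sin_le ((π : ℂ) * z ^ 2 / 2)
      rw [hWim, hE] at h
      exact h
    rw [habs_s]
    have hP2 : P / r ^ 2 ≤ 2 := by
      rw [div_le_iff₀ hr2pos]; linarith
    calc P / r ^ 2 * A ≤ 2 * Real.exp (π / 2 * r ^ 2 * |Real.sin (2 * θ)|) := by
          apply mul_le_mul hP2 hub2 hA0 (by norm_num)
end

section
/- The entire function s(z) = (z² − 1)·z^{−2}·sin(π z²/2) satisfies |s(r e^{i(π/4 + kπ/2)})| ≍ exp((π/2) r²) for k = 0,1,2,3 and r > 0, i.e. there are positive constants c, C with c·exp((π/2) r²) ≤ |s(r e^{i(π/4+kπ/2)})| ≤ C·exp((π/2) r²). -/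
open Complex Real

lemma abs_s_aux (s : ℂ → ℂ)
    (hs_eq : ∀ z : ℂ, z ≠ 0 → s z = (z ^ 2 - 1) / z ^ 2 * Complex.sin (π * z ^ 2 / 2))
    (z : ℂ) (r ε : ℝ) (hr : 0 < r) (hε : ε = 1 ∨ ε = -1)
    (hz2 : z ^ 2 = ((ε * r ^ 2 : ℝ) : ℂ) * Complex.I) :
    ‖s z‖ = Real.sqrt (1 + r ^ 4) / r ^ 2 * Real.sinh (π / 2 * r ^ 2) := by
  have hε0 : ε ≠ 0 := by rcases hε with h | h <;> simp [h]
  have hεabs : |ε| = 1 := by rcases hε with h | h <;> simp [h]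
  have hε2 : ε ^ 2 = 1 := by rcases hε with h | h <;> simp [h]
  have hεr : ε * r ^ 2 ≠ 0 := mul_ne_zero hε0 (pow_ne_zero 2 hr.ne')
  have hz : z ≠ 0 := by
    intro h
    rw [h] at hz2
    simp only [ne_eq, zero_pow, OfNat.ofNat_ne_zero, not_false_eq_true] at hz2
    have h' := hz2.symm
    rw [mul_eq_zero] at h'
    rcases h' with h1 | h1
    · exact hεr (by exact_mod_cast h1)
    · exact Complex.I_ne_zero h1
  rw [hs_eq z hz, norm_mul, norm_div]
  have h1 : ‖z ^ 2 - 1‖ = Real.sqrt (1 + r ^ 4) := by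
    rw [hz2, Complex.norm_def, Complex.normSq_apply]
    simp only [Complex.sub_re, Complex.mul_re, Complex.ofReal_re, Complex.I_re, mul_zero,
      Complex.ofReal_im, Complex.I_im, mul_one, Complex.one_re, Complex.sub_im, Complex.mul_im,
      Complex.one_im]
    congr 1
    nlinarith [hε2]
  have h2 : ‖z ^ 2‖ = r ^ 2 := by
    rw [hz2, norm_mul, Complex.norm_I, mul_one, Complex.norm_real, Real.norm_eq_abs, abs_mul, hεabs, one_mul,
      abs_of_pos (by positivity : (0:ℝ) < r ^ 2)]
  have h3 : ‖Complex.sin (π * z ^ 2 / 2)‖ = Real.sinh (π / 2 * r ^ 2) := by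
    have harg : (π : ℂ) * z ^ 2 / 2 = ((π / 2 * (ε * r ^ 2) : ℝ) : ℂ) * Complex.I := by
      rw [hz2]; push_cast; ring
    rw [harg, Complex.sin_mul_I, norm_mul, Complex.norm_I, mul_one, ← Complex.ofReal_sinh,
      Complex.norm_real, Real.norm_eq_abs, Real.abs_sinh]
    congr 1
    rw [abs_mul, abs_mul, hεabs, one_mul, abs_of_pos (by positivity : (0:ℝ) < π / 2),
      abs_of_pos (by positivity : (0:ℝ) < r ^ 2)]
  rw [h1, h2, h3]

lemma exp_sq_key (n : ℕ) :
    (Complex.exp (Complex.I * (π / 4 + (n : ℂ) * (π / 2)))) ^ 2 = (-1 : ℂ) ^ n * Complex.I := by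
  rw [sq, ← Complex.exp_add]
  have harg : Complex.I * (π / 4 + (n : ℂ) * (π / 2)) + Complex.I * (π / 4 + (n : ℂ) * (π / 2))
      = (π : ℂ) / 2 * Complex.I + (n : ℂ) * ((π : ℂ) * Complex.I) := by ring
  rw [harg, Complex.exp_add, Complex.exp_nat_mul, Complex.exp_pi_mul_I]
  have h2 : Complex.exp ((π : ℂ) / 2 * Complex.I) = Complex.I := by
    have hc : ((π : ℂ) / 2) = ((π / 2 : ℝ) : ℂ) := by push_cast; ring
    rw [Complex.exp_mul_I, hc, ← Complex.ofReal_cos, ← Complex.ofReal_sin,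
      Real.cos_pi_div_two, Real.sin_pi_div_two]
    simp
  rw [h2]; ring

lemma real_est (r : ℝ) (hr : 0 < r) :
    min ((1 - Real.exp (-π)) / 2) (π / 2 * Real.exp (-(π / 2))) * Real.exp (π / 2 * r ^ 2)
      ≤ Real.sqrt (1 + r ^ 4) / r ^ 2 * Real.sinh (π / 2 * r ^ 2) ∧
    Real.sqrt (1 + r ^ 4) / r ^ 2 * Real.sinh (π / 2 * r ^ 2)
      ≤ (1 + π) / 2 * Real.exp (π / 2 * r ^ 2) := by
  set t := π / 2 * r ^ 2 with ht_def
  have ht : 0 < t := by positivity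
  have hr2 : (0:ℝ) < r ^ 2 := by positivity
  have hsinh_pos : 0 < Real.sinh t := Real.sinh_pos_iff.2 ht
  have hexp_pos : (0:ℝ) < Real.exp t := Real.exp_pos t
  have hB : Real.sinh t ≤ t * Real.exp t := by
    rw [Real.sinh_eq]
    have h1 : Real.exp (-t) = Real.exp t * Real.exp (-(2*t)) := by
      rw [← Real.exp_add]; ring_nf
    have h2 : -(2*t) + 1 ≤ Real.exp (-(2*t)) := Real.add_one_le_exp _
    nlinarith
  constructor
  · -- lower bound
    rcases le_or_gt 1 r with h1 | h1
    · -- r ≥ 1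
      have hr21 : (1:ℝ) ≤ r ^ 2 := by nlinarith
      have htpi : π / 2 ≤ t := by
        rw [ht_def]
        nlinarith [mul_le_mul_of_nonneg_left hr21 (by positivity : (0:ℝ) ≤ π / 2)]
      have hsq : (1:ℝ) ≤ Real.sqrt (1 + r ^ 4) / r ^ 2 := by
        rw [le_div_iff₀ hr2, one_mul,
          show r ^ 2 = Real.sqrt ((r ^ 2) ^ 2) from (Real.sqrt_sq hr2.le).symm]
        apply Real.sqrt_le_sqrt
        nlinarith
      have hsinh_lb : (1 - Real.exp (-π)) / 2 * Real.exp t ≤ Real.sinh t := by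
        rw [Real.sinh_eq]
        have h2 : Real.exp (-t) = Real.exp t * Real.exp (-(2*t)) := by
          rw [← Real.exp_add]; ring_nf
        have h3 : Real.exp (-(2*t)) ≤ Real.exp (-π) := by
          apply Real.exp_le_exp.2; linarith
        nlinarith
      calc min ((1 - Real.exp (-π)) / 2) (π / 2 * Real.exp (-(π / 2))) * Real.exp t
          ≤ (1 - Real.exp (-π)) / 2 * Real.exp t :=
            mul_le_mul_of_nonneg_right (min_le_left _ _) hexp_pos.le
        _ ≤ Real.sinh t := hsinh_lb
        _ = 1 * Real.sinh t := (one_mul _).symm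
        _ ≤ Real.sqrt (1 + r ^ 4) / r ^ 2 * Real.sinh t :=
            mul_le_mul_of_nonneg_right hsq hsinh_pos.le
    · -- r < 1
      have hr21 : r ^ 2 ≤ 1 := by nlinarith
      have htpi : t ≤ π / 2 := by
        rw [ht_def]
        nlinarith [mul_le_mul_of_nonneg_left hr21 (by positivity : (0:ℝ) ≤ π / 2)]
      have hsq1 : (1:ℝ) ≤ Real.sqrt (1 + r ^ 4) := by
        have := Real.sqrt_le_sqrt (show (1:ℝ) ≤ 1 + r ^ 4 by nlinarith)
        rwa [Real.sqrt_one] at this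
      have hst : t ≤ Real.sinh t := (Real.self_lt_sinh_iff.2 ht).le
      have hee : Real.exp (-(π/2)) * Real.exp (π/2) = 1 := by
        rw [← Real.exp_add]; simp
      have htr : t / r ^ 2 = π / 2 := by
        rw [ht_def]; field_simp
      calc min ((1 - Real.exp (-π)) / 2) (π / 2 * Real.exp (-(π / 2))) * Real.exp t
          ≤ π / 2 * Real.exp (-(π / 2)) * Real.exp t :=
            mul_le_mul_of_nonneg_right (min_le_right _ _) hexp_pos.le
        _ ≤ π / 2 * Real.exp (-(π / 2)) * Real.exp (π / 2) := by
            have := Real.exp_le_exp.2 htpi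
            have hpos : (0:ℝ) ≤ π / 2 * Real.exp (-(π / 2)) := by positivity
            exact mul_le_mul_of_nonneg_left this hpos
        _ = π / 2 := by rw [mul_assoc, hee, mul_one]
        _ = t / r ^ 2 := htr.symm
        _ ≤ Real.sinh t / r ^ 2 := by gcongr
        _ = 1 / r ^ 2 * Real.sinh t := by ring
        _ ≤ Real.sqrt (1 + r ^ 4) / r ^ 2 * Real.sinh t := by gcongr
  · -- upper bound
    have hsq : Real.sqrt (1 + r ^ 4) ≤ 1 + r ^ 2 := by
      rw [show (1:ℝ) + r ^ 2 = Real.sqrt ((1 + r ^ 2) ^ 2) from (Real.sqrt_sq (by positivity)).symm]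
      apply Real.sqrt_le_sqrt
      nlinarith
    have hA : Real.sinh t ≤ Real.exp t / 2 := by
      rw [Real.sinh_eq]
      have := Real.exp_pos (-t)
      linarith
    have hkey : (1 + r ^ 2) / r ^ 2 * Real.sinh t = Real.sinh t / r ^ 2 + Real.sinh t := by
      field_simp
    have h5 : Real.sinh t / r ^ 2 ≤ π / 2 * Real.exp t := by
      rw [div_le_iff₀ hr2]
      calc Real.sinh t ≤ t * Real.exp t := hB
        _ = π / 2 * Real.exp t * r ^ 2 := by rw [ht_def]; ring
    calc Real.sqrt (1 + r ^ 4) / r ^ 2 * Real.sinh t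
        ≤ (1 + r ^ 2) / r ^ 2 * Real.sinh t := by gcongr
      _ = Real.sinh t / r ^ 2 + Real.sinh t := hkey
      _ ≤ π / 2 * Real.exp t + Real.exp t / 2 := add_le_add h5 hA
      _ = (1 + π) / 2 * Real.exp t := by ring

/-- On the diagonal rays θ = π/4 + kπ/2, |s(re^{iθ})| ≍ exp((π/2)r²), where
s(z) = (z²−1) z^{−2} sin(πz²/2). -/
theorem s_estimate_on_diagonals (s : ℂ → ℂ) (hs : Differentiable ℂ s)
    (hs_eq : ∀ z : ℂ, z ≠ 0 → s z = (z ^ 2 - 1) / z ^ 2 * Complex.sin (π * z ^ 2 / 2)) :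
    ∃ c C : ℝ, 0 < c ∧ c ≤ C ∧
      ∀ (k : Fin 4) (r : ℝ), 0 < r →
        c * Real.exp (π / 2 * r ^ 2) ≤
          ‖s ((r : ℂ) * Complex.exp (Complex.I * (π / 4 + (k : ℕ) * (π / 2))))‖ ∧
        ‖s ((r : ℂ) * Complex.exp (Complex.I * (π / 4 + (k : ℕ) * (π / 2))))‖ ≤
          C * Real.exp (π / 2 * r ^ 2) := by
  refine ⟨min ((1 - Real.exp (-π)) / 2) (π / 2 * Real.exp (-(π / 2))), (1 + π) / 2, ?_, ?_, ?_⟩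
  · apply lt_min
    · have : Real.exp (-π) < 1 := Real.exp_lt_one_iff.2 (neg_neg_iff_pos.2 Real.pi_pos)
      linarith
    · positivity
  · calc min ((1 - Real.exp (-π)) / 2) (π / 2 * Real.exp (-(π / 2)))
        ≤ (1 - Real.exp (-π)) / 2 := min_le_left _ _
      _ ≤ (1 + π) / 2 := by
          have h1 : (0:ℝ) < Real.exp (-π) := Real.exp_pos _
          have h2 : (0:ℝ) < π := Real.pi_pos
          linarith
  · intro k r hr
    set n := (k : ℕ) with hn
    set ε : ℝ := (-1 : ℝ) ^ n with hε_def
    have hε : ε = 1 ∨ ε = -1 := by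
      rcases Nat.even_or_odd n with h | h
      · left; exact h.neg_one_pow
      · right; exact h.neg_one_pow
    set z : ℂ := (r : ℂ) * Complex.exp (Complex.I * (π / 4 + (n : ℂ) * (π / 2))) with hz_def
    have hz2 : z ^ 2 = ((ε * r ^ 2 : ℝ) : ℂ) * Complex.I := by
      rw [hz_def, mul_pow, exp_sq_key n, hε_def]
      push_cast
      ring
    have habs := abs_s_aux s hs_eq z r ε hr hε hz2
    rw [habs]
    exact real_est r hr
end

section
/- Every function F in the Fock space satisfies |F(z)| = o(exp((π/2)|z|²)) as |z| → ∞; that is, for every ε > 0 there is R such that |F(z)| ≤ ε·exp((π/2)|z|²) for all |z| ≥ R. -/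
open Complex Real MeasureTheory Metric intervalIntegral

lemma circle_mean (H : ℂ → ℂ) (hH : Differentiable ℂ H) (c : ℂ) {s : ℝ} (hs : 0 < s) :
    2 * π * ‖H c‖ ≤ ∫ θ in (0:ℝ)..2*π, ‖H (circleMap c s θ)‖ := by
  have key : (∮ z in C(c, s), (z - c)⁻¹ • H z) = (2 * ↑π * I : ℂ) • H c :=
    Complex.circleIntegral_sub_center_inv_smul_of_differentiable_on_off_countable hs
      Set.countable_empty hH.continuous.continuousOn
      (fun w _ => hH.differentiableAt)
  have expand : (∮ z in C(c, s), (z - c)⁻¹ • H z)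
      = I * ∫ θ in (0:ℝ)..2*π, H (circleMap c s θ) := by
    rw [circleIntegral, ← intervalIntegral.integral_const_mul]
    refine intervalIntegral.integral_congr fun θ _ => ?_
    have hne : circleMap 0 s θ ≠ 0 := by
      simpa using circleMap_ne_center (c := (0:ℂ)) hs.ne' (θ := θ)
    rw [deriv_circleMap, circleMap_sub_center, smul_eq_mul, smul_eq_mul]
    field_simp
  have hval : (∫ θ in (0:ℝ)..2*π, H (circleMap c s θ)) = (2 * π) * H c := by
    have : I * ∫ θ in (0:ℝ)..2*π, H (circleMap c s θ) = I * ((2*π) * H c) := by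
      rw [← expand, key]; rw [smul_eq_mul]; ring
    exact mul_left_cancel₀ I_ne_zero this
  calc 2 * π * ‖H c‖ = ‖∫ θ in (0:ℝ)..2*π, H (circleMap c s θ)‖ := by
        rw [hval, norm_mul]; norm_num [Complex.norm_real, _root_.abs_of_nonneg Real.pi_pos.le]
    _ ≤ ∫ θ in (0:ℝ)..2*π, ‖H (circleMap c s θ)‖ :=
        intervalIntegral.norm_integral_le_integral_norm (by positivity)


lemma aux_rhs (H : ℂ → ℂ) (c : ℂ) {r : ℝ} (hr : 0 < r) :
    (∫ w in ball c r, ‖H w‖) = ∫ w, ((ball (0:ℂ) r).indicator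
      (fun w => ‖H (c + w)‖)) w := by
  have himg : (fun x : ℂ => c + x) '' ball (0:ℂ) r = ball c r := by
    ext w
    simp only [Set.mem_image, mem_ball, dist_eq_norm, dist_zero_right]
    constructor
    · rintro ⟨x, hx, rfl⟩; simpa using hx
    · intro h; exact ⟨w - c, by simpa [norm_sub_rev] using h, by ring⟩
  rw [MeasureTheory.integral_indicator measurableSet_ball, ← himg,
      (measurePreserving_add_left volume c).setIntegral_image_emb
        (MeasurableEquiv.addLeft c).measurableEmbedding]

lemma aux_step (H : ℂ → ℂ) (c : ℂ) {r : ℝ} (hr : 0 < r) :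
    (∫ p in polarCoord.target, p.1 • ((ball (0:ℂ) r).indicator
        (fun w => ‖H (c + w)‖)) (Complex.polarCoord.symm p))
      = ∫ p in Set.Ioo (0:ℝ) r ×ˢ Set.Ioo (-π) π,
          p.1 * ‖H (c + p.1 * (Real.cos p.2 + Real.sin p.2 * Complex.I))‖ := by
  set φ : ℝ × ℝ → ℝ :=
    fun p => p.1 * ‖H (c + p.1 * (Real.cos p.2 + Real.sin p.2 * Complex.I))‖ with hφdef
  set T : Set (ℝ × ℝ) := Set.Ioo (0:ℝ) r ×ˢ Set.Ioo (-π) π with hTdef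
  have hTmeas : MeasurableSet T := measurableSet_Ioo.prod measurableSet_Ioo
  have key : (∫ p in polarCoord.target, p.1 • ((ball (0:ℂ) r).indicator
        (fun w => ‖H (c + w)‖)) (Complex.polarCoord.symm p))
      = ∫ p in polarCoord.target, T.indicator φ p := by
    refine setIntegral_congr_fun polarCoord.open_target.measurableSet fun p hp => ?_
    have hp1 : (0:ℝ) < p.1 := hp.1
    by_cases h : p.1 < r
    · have hball : Complex.polarCoord.symm p ∈ ball (0:ℂ) r := by
        rw [mem_ball_zero_iff, norm_polarCoord_symm, abs_of_pos hp1]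
        exact h
      rw [Set.indicator_of_mem (show p ∈ T from ⟨⟨hp1, h⟩, hp.2⟩),
          Set.indicator_of_mem hball]
      simp only [hφdef, smul_eq_mul, Complex.polarCoord_symm_apply]
    · have hball : Complex.polarCoord.symm p ∉ ball (0:ℂ) r := by
        rw [mem_ball_zero_iff, norm_polarCoord_symm, abs_of_pos hp1]
        exact h
      rw [Set.indicator_of_notMem (show p ∉ T from fun hc => h hc.1.2),
          Set.indicator_of_notMem hball, smul_zero]
  rw [key, setIntegral_indicator hTmeas,
      show polarCoord.target ∩ T = T from Set.inter_eq_self_of_subset_right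
        (Set.prod_mono Set.Ioo_subset_Ioi_self subset_rfl)]

lemma aux_cont (H : ℂ → ℂ) (hH : Differentiable ℂ H) (c : ℂ) :
    Continuous (fun p : ℝ × ℝ =>
      p.1 * ‖H (c + p.1 * (Real.cos p.2 + Real.sin p.2 * Complex.I))‖) := by
  apply continuous_fst.mul
  apply Continuous.norm
  apply hH.continuous.comp
  fun_prop

lemma aux_iter {r : ℝ} (hr : 0 < r) (φ : ℝ × ℝ → ℝ) (hφc : Continuous φ) :
    (∫ p in Set.Ioo (0:ℝ) r ×ˢ Set.Ioo (-π) π, φ p)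
      = ∫ s in Set.Ioo (0:ℝ) r, ∫ θ in Set.Ioo (-π) π, φ (s, θ) := by
  have hint : IntegrableOn φ (Set.Ioo (0:ℝ) r ×ˢ Set.Ioo (-π) π) :=
    ((hφc.continuousOn.integrableOn_compact
      (isCompact_Icc.prod isCompact_Icc)).mono_set
      (Set.prod_mono Set.Ioo_subset_Icc_self Set.Ioo_subset_Icc_self))
  rw [Measure.volume_eq_prod]
  exact setIntegral_prod φ (by rwa [← Measure.volume_eq_prod])

lemma aux_psiint {r : ℝ} (hr : 0 < r) (φ : ℝ × ℝ → ℝ) (hφc : Continuous φ) :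
    IntegrableOn (fun s => ∫ θ in Set.Ioo (-π) π, φ (s, θ)) (Set.Ioo (0:ℝ) r) := by
  have hint : IntegrableOn φ (Set.Ioo (0:ℝ) r ×ˢ Set.Ioo (-π) π) :=
    ((hφc.continuousOn.integrableOn_compact
      (isCompact_Icc.prod isCompact_Icc)).mono_set
      (Set.prod_mono Set.Ioo_subset_Icc_self Set.Ioo_subset_Icc_self))
  have hint' : Integrable φ ((volume.restrict (Set.Ioo (0:ℝ) r)).prod
      (volume.restrict (Set.Ioo (-π) π))) := by
    rw [Measure.prod_restrict, ← Measure.volume_eq_prod]; exact hint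
  exact hint'.integral_prod_left

lemma aux_circle (H : ℂ → ℂ) (hH : Differentiable ℂ H) (c : ℂ) {r : ℝ} (hr : 0 < r) :
    ∀ s : ℝ, s ∈ Set.Ioo (0:ℝ) r →
      2 * π * ‖H c‖ * s ≤ ∫ θ in Set.Ioo (-π) π,
        (fun p : ℝ × ℝ =>
          p.1 * ‖H (c + p.1 * (Real.cos p.2 + Real.sin p.2 * Complex.I))‖) (s, θ) := by
  intro s hs
  have hmap : ∀ θ : ℝ, c + (s:ℂ) * (Real.cos θ + Real.sin θ * Complex.I)
      = circleMap c s θ := by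
    intro θ
    simp [circleMap, Complex.exp_mul_I, Complex.ofReal_cos, Complex.ofReal_sin]
  have hper : Function.Periodic (fun θ => ‖H (circleMap c s θ)‖) (2*π) := by
    intro θ; simp only [periodic_circleMap c s θ]
  have h1 : (∫ θ in Set.Ioo (-π) π,
        (fun p : ℝ × ℝ =>
          p.1 * ‖H (c + p.1 * (Real.cos p.2 + Real.sin p.2 * Complex.I))‖) (s, θ))
      = s * ∫ θ in (0:ℝ)..2*π, ‖H (circleMap c s θ)‖ := by
    simp only [hmap]
    rw [MeasureTheory.integral_const_mul]
    congr 1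
    rw [← MeasureTheory.integral_Ioc_eq_integral_Ioo,
        ← intervalIntegral.integral_of_le (by linarith [Real.pi_pos])]
    have h2 := hper.intervalIntegral_add_eq (-π) 0
    rwa [show -π + 2*π = π by ring, zero_add] at h2
  rw [h1]
  have h3 := circle_mean H hH c hs.1
  calc 2 * π * ‖H c‖ * s = s * (2 * π * ‖H c‖) := by ring
    _ ≤ s * ∫ θ in (0:ℝ)..2*π, ‖H (circleMap c s θ)‖ :=
      mul_le_mul_of_nonneg_left h3 hs.1.le

set_option maxHeartbeats 1600000 in
lemma submean (H : ℂ → ℂ) (hH : Differentiable ℂ H) (c : ℂ) {r : ℝ} (hr : 0 < r) :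
    π * r ^ 2 * ‖H c‖ ≤ ∫ w in ball c r, ‖H w‖ := by
  have hφc := aux_cont H hH c
  have hval : (∫ s in Set.Ioo (0:ℝ) r, 2 * π * ‖H c‖ * s) = π * r ^ 2 * ‖H c‖ := by
    rw [MeasureTheory.integral_const_mul, ← MeasureTheory.integral_Ioc_eq_integral_Ioo,
        ← intervalIntegral.integral_of_le hr.le, integral_id]
    ring
  have hlin : IntegrableOn (fun s : ℝ => 2 * π * ‖H c‖ * s) (Set.Ioo (0:ℝ) r) :=
    ((continuous_const.mul continuous_id).continuousOn.integrableOn_compact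
      isCompact_Icc).mono_set Set.Ioo_subset_Icc_self
  calc π * r ^ 2 * ‖H c‖
      = ∫ s in Set.Ioo (0:ℝ) r, 2 * π * ‖H c‖ * s := hval.symm
    _ ≤ ∫ s in Set.Ioo (0:ℝ) r, ∫ θ in Set.Ioo (-π) π, (fun p : ℝ × ℝ =>
          p.1 * ‖H (c + p.1 * (Real.cos p.2 + Real.sin p.2 * Complex.I))‖) (s, θ) :=
        setIntegral_mono_on hlin (aux_psiint hr _ hφc) measurableSet_Ioo
          (aux_circle H hH c hr)
    _ = ∫ p in Set.Ioo (0:ℝ) r ×ˢ Set.Ioo (-π) π, (fun p : ℝ × ℝ =>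
          p.1 * ‖H (c + p.1 * (Real.cos p.2 + Real.sin p.2 * Complex.I))‖) p :=
        (aux_iter hr _ hφc).symm
    _ = ∫ p in polarCoord.target, p.1 • ((ball (0:ℂ) r).indicator
          (fun w => ‖H (c + w)‖)) (Complex.polarCoord.symm p) := (aux_step H c hr).symm
    _ = ∫ w, ((ball (0:ℂ) r).indicator (fun w => ‖H (c + w)‖)) w :=
        Complex.integral_comp_polarCoord_symm _
    _ = ∫ w in ball c r, ‖H w‖ := (aux_rhs H c hr).symm

lemma normsq_re_im (x : ℂ) : ‖x‖^2 = x.re^2 + x.im^2 := by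
  rw [Complex.sq_norm, Complex.normSq_apply]; ring

lemma gnorm (F : ℂ → ℂ) (z w : ℂ) :
    ‖F w * Complex.exp (-(π:ℂ) * (starRingEnd ℂ z) * w)‖^2
      = ‖F w‖^2 * Real.exp (π*‖w-z‖^2 - π*‖w‖^2 - π*‖z‖^2) := by
  rw [norm_mul, mul_pow, Complex.norm_exp]
  congr 1
  rw [sq (Real.exp _), ← Real.exp_add]
  congr 1
  rw [normsq_re_im (w - z), normsq_re_im w, normsq_re_im z, Complex.sub_re, Complex.sub_im]
  simp [Complex.mul_re, Complex.mul_im, Complex.conj_re, Complex.conj_im]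
  ring

lemma pointwise (F : ℂ → ℂ) (hF : Differentiable ℂ F) (z : ℂ) :
    ‖F z‖^2 * Real.exp (-π * ‖z‖^2)
      ≤ (Real.exp π / π) * ∫ w in ball z 1, ‖F w‖^2 * Real.exp (-π * ‖w‖^2) := by
  set G : ℂ → ℂ := fun w => F w * Complex.exp (-(π:ℂ) * (starRingEnd ℂ z) * w) with hGdef
  have hG : Differentiable ℂ G :=
    hF.mul (Complex.differentiable_exp.comp ((differentiable_const _).mul differentiable_id))
  have hH : Differentiable ℂ (fun w => (G w)^2) := hG.pow 2
  have hsub := submean (fun w => (G w)^2) hH z one_pos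
  simp only [norm_pow] at hsub
  have hGn : ∀ w, ‖G w‖^2 = ‖F w‖^2 * Real.exp (π*‖w-z‖^2 - π*‖w‖^2 - π*‖z‖^2) :=
    fun w => gnorm F z w
  -- integrability of both integrands on ball z 1
  have hcont1 : Continuous fun w => ‖G w‖^2 := (hG.continuous.norm).pow 2
  have hcont2 : Continuous fun w : ℂ => Real.exp π * Real.exp (-π*‖z‖^2) *
      (‖F w‖^2 * Real.exp (-π * ‖w‖^2)) := by have hFc := hF.continuous; fun_prop
  have hI1 : IntegrableOn (fun w => ‖G w‖^2) (ball z 1) :=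
    (hcont1.continuousOn.integrableOn_compact (isCompact_closedBall z 1)).mono_set
      ball_subset_closedBall
  have hI2 : IntegrableOn (fun w : ℂ => Real.exp π * Real.exp (-π*‖z‖^2) *
      (‖F w‖^2 * Real.exp (-π * ‖w‖^2))) (ball z 1) :=
    (hcont2.continuousOn.integrableOn_compact (isCompact_closedBall z 1)).mono_set
      ball_subset_closedBall
  have hptw : ∀ w ∈ ball z 1, ‖G w‖^2 ≤ Real.exp π * Real.exp (-π*‖z‖^2) *
      (‖F w‖^2 * Real.exp (-π * ‖w‖^2)) := by
    intro w hw
    rw [hGn w]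
    have h1 : ‖w - z‖^2 ≤ 1 := by
      have : ‖w - z‖ < 1 := by rwa [mem_ball, dist_eq_norm] at hw
      nlinarith [norm_nonneg (w - z)]
    have h2 : Real.exp (π*‖w-z‖^2 - π*‖w‖^2 - π*‖z‖^2)
        ≤ Real.exp π * Real.exp (-π*‖z‖^2) * Real.exp (-π * ‖w‖^2) := by
      rw [← Real.exp_add, ← Real.exp_add]
      apply Real.exp_le_exp.2
      nlinarith [Real.pi_pos]
    calc ‖F w‖^2 * Real.exp (π*‖w-z‖^2 - π*‖w‖^2 - π*‖z‖^2)
        ≤ ‖F w‖^2 * (Real.exp π * Real.exp (-π*‖z‖^2) * Real.exp (-π * ‖w‖^2)) :=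
          mul_le_mul_of_nonneg_left h2 (by positivity)
      _ = Real.exp π * Real.exp (-π*‖z‖^2) * (‖F w‖^2 * Real.exp (-π * ‖w‖^2)) := by ring
  have hmono : (∫ w in ball z 1, ‖G w‖^2)
      ≤ ∫ w in ball z 1, Real.exp π * Real.exp (-π*‖z‖^2) *
          (‖F w‖^2 * Real.exp (-π * ‖w‖^2)) :=
    setIntegral_mono_on hI1 hI2 measurableSet_ball hptw
  rw [MeasureTheory.integral_const_mul] at hmono
  have hGz : ‖G z‖^2 = ‖F z‖^2 * Real.exp (-π*‖z‖^2) * Real.exp (-π*‖z‖^2) := by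
    rw [hGn z]
    simp only [sub_self, norm_zero]
    rw [show π*(0:ℝ)^2 - π*‖z‖^2 - π*‖z‖^2 = (-π*‖z‖^2) + (-π*‖z‖^2) by ring, Real.exp_add]
    ring
  -- combine: π * ‖G z‖^2 ≤ ∫ ≤ e^π e^{-π‖z‖²} ∫ g
  have key : π * (‖F z‖^2 * Real.exp (-π*‖z‖^2) * Real.exp (-π*‖z‖^2))
      ≤ Real.exp π * Real.exp (-π*‖z‖^2) *
        ∫ w in ball z 1, ‖F w‖^2 * Real.exp (-π * ‖w‖^2) := by
    calc π * (‖F z‖^2 * Real.exp (-π*‖z‖^2) * Real.exp (-π*‖z‖^2))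
        = π * 1^2 * ‖G z‖^2 := by rw [hGz]; ring
      _ ≤ ∫ w in ball z 1, ‖G w‖^2 := hsub
      _ ≤ _ := hmono
  have hexp : (0:ℝ) < Real.exp (-π*‖z‖^2) := Real.exp_pos _
  have h' : (π * (‖F z‖^2 * Real.exp (-π*‖z‖^2))) * Real.exp (-π*‖z‖^2)
      ≤ (Real.exp π * ∫ w in ball z 1, ‖F w‖^2 * Real.exp (-π * ‖w‖^2))
        * Real.exp (-π*‖z‖^2) := by
    calc (π * (‖F z‖^2 * Real.exp (-π*‖z‖^2))) * Real.exp (-π*‖z‖^2)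
        = π * (‖F z‖^2 * Real.exp (-π*‖z‖^2) * Real.exp (-π*‖z‖^2)) := by ring
      _ ≤ Real.exp π * Real.exp (-π*‖z‖^2) *
          ∫ w in ball z 1, ‖F w‖^2 * Real.exp (-π * ‖w‖^2) := key
      _ = (Real.exp π * ∫ w in ball z 1, ‖F w‖^2 * Real.exp (-π * ‖w‖^2))
          * Real.exp (-π*‖z‖^2) := by ring
  have h'' : π * (‖F z‖^2 * Real.exp (-π*‖z‖^2))
      ≤ Real.exp π * ∫ w in ball z 1, ‖F w‖^2 * Real.exp (-π * ‖w‖^2) :=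
    le_of_mul_le_mul_right h' hexp
  rw [div_mul_eq_mul_div, le_div_iff₀ Real.pi_pos, mul_comm _ π]
  exact h''
lemma tail_small (g : ℂ → ℝ) (hg : Integrable g) {δ : ℝ} (hδ : 0 < δ) :
    ∃ n : ℕ, ∫ w in (closedBall (0:ℂ) (n:ℝ))ᶜ, g w < δ := by
  have hmono : Monotone (fun n : ℕ => closedBall (0:ℂ) (n:ℝ)) := fun m n hmn =>
    closedBall_subset_closedBall (by exact_mod_cast hmn)
  have hunion : (⋃ n : ℕ, closedBall (0:ℂ) (n:ℝ)) = Set.univ := by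
    ext x
    simp only [Set.mem_iUnion, mem_closedBall, dist_zero_right, Set.mem_univ, iff_true]
    obtain ⟨n, hn⟩ := exists_nat_ge ‖x‖
    exact ⟨n, hn⟩
  have htendsto := MeasureTheory.tendsto_setIntegral_of_monotone
    (fun n : ℕ => measurableSet_closedBall) hmono
    (by rw [hunion]; exact hg.integrableOn)
  rw [hunion, setIntegral_univ] at htendsto
  have h2 : Filter.Tendsto (fun n : ℕ => ∫ w in (closedBall (0:ℂ) (n:ℝ))ᶜ, g w)
      Filter.atTop (nhds 0) := by
    have heq : ∀ n : ℕ, ∫ w in (closedBall (0:ℂ) (n:ℝ))ᶜ, g w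
        = (∫ w, g w) - ∫ w in closedBall (0:ℂ) (n:ℝ), g w := by
      intro n
      have := MeasureTheory.integral_add_compl (measurableSet_closedBall
        (x := (0:ℂ)) (ε := (n:ℝ))) hg
      linarith
    simp only [heq]
    have := htendsto.const_sub (∫ w, g w)
    simpa using this
  have := h2.eventually_lt_const hδ
  exact this.exists

/-- Every function F in the Fock space satisfies |F(z)| = o(exp((π/2)|z|²)) as |z| → ∞. -/
theorem fock_space_little_o (F : ℂ → ℂ) (hF : Differentiable ℂ F)
    (hFock : Integrable (fun z : ℂ => ‖F z‖ ^ 2 * Real.exp (-π * ‖z‖ ^ 2))) :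
    ∀ ε > 0, ∃ R : ℝ, ∀ z : ℂ, R ≤ ‖z‖ →
      ‖F z‖ ≤ ε * Real.exp (π / 2 * ‖z‖ ^ 2) := by
  intro ε hε
  have hg : Integrable (fun w : ℂ => ‖F w‖^2 * Real.exp (-π * ‖w‖^2)) := by
    exact hFock
  have hg0 : ∀ w : ℂ, 0 ≤ ‖F w‖^2 * Real.exp (-π * ‖w‖^2) := fun w => by positivity
  have hδ : (0:ℝ) < ε^2 * π / Real.exp π := by positivity
  obtain ⟨n, hn⟩ := tail_small _ hg hδ
  refine ⟨(n:ℝ) + 2, fun z hz => ?_⟩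
  have hsubset : ball z 1 ⊆ (closedBall (0:ℂ) (n:ℝ))ᶜ := by
    intro w hw
    rw [mem_ball] at hw
    simp only [Set.mem_compl_iff, mem_closedBall, dist_zero_right, not_le]
    have h1 : dist z 0 ≤ dist z w + dist w 0 := dist_triangle z w 0
    simp only [dist_zero_right] at h1
    rw [dist_comm] at hw
    linarith
  have hmono2 : (∫ w in ball z 1, ‖F w‖^2 * Real.exp (-π * ‖w‖^2))
      ≤ ∫ w in (closedBall (0:ℂ) (n:ℝ))ᶜ, ‖F w‖^2 * Real.exp (-π * ‖w‖^2) :=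
    setIntegral_mono_set hg.integrableOn
      (Filter.Eventually.of_forall fun w => hg0 w) (Filter.Eventually.of_forall hsubset)
  have hpt := pointwise F hF z
  have hbound : ‖F z‖^2 * Real.exp (-π * ‖z‖^2) ≤ ε^2 := by
    calc ‖F z‖^2 * Real.exp (-π * ‖z‖^2)
        ≤ (Real.exp π / π) * ∫ w in ball z 1, ‖F w‖^2 * Real.exp (-π * ‖w‖^2) := hpt
      _ ≤ (Real.exp π / π) * ∫ w in (closedBall (0:ℂ) (n:ℝ))ᶜ,
            ‖F w‖^2 * Real.exp (-π * ‖w‖^2) :=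
          mul_le_mul_of_nonneg_left hmono2 (by positivity)
      _ ≤ (Real.exp π / π) * (ε^2 * π / Real.exp π) :=
          mul_le_mul_of_nonneg_left hn.le (by positivity)
      _ = ε^2 := by
          field_simp
  have hsq : ‖F z‖^2 ≤ (ε * Real.exp (π/2 * ‖z‖^2))^2 := by
    have hexp2 : (Real.exp (π/2 * ‖z‖^2))^2 = Real.exp (π * ‖z‖^2) := by
      rw [sq, ← Real.exp_add]; congr 1; ring
    rw [mul_pow, hexp2]
    have hepos : (0:ℝ) < Real.exp (-π * ‖z‖^2) := Real.exp_pos _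
    have h3 : ‖F z‖^2 * Real.exp (-π * ‖z‖^2) * Real.exp (π * ‖z‖^2)
        ≤ ε^2 * Real.exp (π * ‖z‖^2) :=
      mul_le_mul_of_nonneg_right hbound (Real.exp_pos _).le
    rwa [mul_assoc, ← Real.exp_add, show -π * ‖z‖^2 + π * ‖z‖^2 = 0 by ring,
        Real.exp_zero, mul_one] at h3
  calc ‖F z‖ = Real.sqrt (‖F z‖^2) := (Real.sqrt_sq (norm_nonneg _)).symm
    _ ≤ Real.sqrt ((ε * Real.exp (π/2 * ‖z‖^2))^2) := Real.sqrt_le_sqrt hsq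
    _ = ε * Real.exp (π/2 * ‖z‖^2) := Real.sqrt_sq (by positivity)
end

section
/- Let h : ℝ → ℝ be a 2-trigonometrically convex function (the indicator of an entire function of order 2). If h has a local maximum at θ₀, then h(θ) ≥ h(θ₀)·cos(2(θ − θ₀)) for all θ with |θ − θ₀| ≤ π/4. -/
set_option maxHeartbeats 1000000


open Real

private lemma trig_core (h : ℝ → ℝ)
    (hconv : ∀ θ₁ θ₂ θ₃ : ℝ, θ₁ < θ₂ → θ₂ < θ₃ → θ₃ - θ₁ < π / 2 →
      h θ₂ * Real.sin (2 * (θ₃ - θ₁)) ≤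
        h θ₁ * Real.sin (2 * (θ₃ - θ₂)) + h θ₃ * Real.sin (2 * (θ₂ - θ₁)))
    (θ₀ δ : ℝ) (hδ : 0 < δ) (hloc : ∀ x : ℝ, |x - θ₀| < δ → h x ≤ h θ₀)
    (a : ℝ) (ha : 0 < a) (ha2 : a ≤ π / 4) :
    h θ₀ * Real.cos (2 * a) ≤ h (θ₀ + a) := by
  have hpi : (3 : ℝ) < π := Real.pi_gt_three
  refine le_of_forall_pos_le_add fun c hc => ?_
  obtain ⟨ε, hε0, hεδ, hεhalf, hεc⟩ :
      ∃ ε : ℝ, 0 < ε ∧ ε < δ ∧ ε ≤ 1 / 2 ∧ 2 * (|h θ₀| + 1) * ε ≤ c := by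
    have habs : (0:ℝ) < 2 * (|h θ₀| + 1) := by positivity
    refine ⟨min (min (δ / 2) (1 / 2)) (c / (2 * (|h θ₀| + 1))), ?_, ?_, ?_, ?_⟩
    · exact lt_min (lt_min (by linarith) (by norm_num)) (by positivity)
    · exact lt_of_le_of_lt ((min_le_left _ _).trans (min_le_left _ _)) (by linarith)
    · exact (min_le_left _ _).trans (min_le_right _ _)
    · have hle : min (min (δ / 2) (1 / 2)) (c / (2 * (|h θ₀| + 1))) ≤
          c / (2 * (|h θ₀| + 1)) := min_le_right _ _
      calc 2 * (|h θ₀| + 1) * min (min (δ / 2) (1 / 2)) (c / (2 * (|h θ₀| + 1)))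
          ≤ 2 * (|h θ₀| + 1) * (c / (2 * (|h θ₀| + 1))) :=
            mul_le_mul_of_nonneg_left hle (le_of_lt habs)
        _ = c := by field_simp
  -- apply convexity
  have h3 : θ₀ + a - (θ₀ - ε) < π / 2 := by
    have : ε < π / 4 := by linarith
    linarith
  have key := hconv (θ₀ - ε) θ₀ (θ₀ + a) (by linarith) (by linarith) h3
  have e1 : 2 * (θ₀ + a - (θ₀ - ε)) = 2 * a + 2 * ε := by ring
  have e2 : 2 * (θ₀ + a - θ₀) = 2 * a := by ring
  have e3 : 2 * (θ₀ - (θ₀ - ε)) = 2 * ε := by ring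
  rw [e1, e2, e3] at key
  rw [Real.sin_add] at key
  -- local max bound
  have hmono : h (θ₀ - ε) ≤ h θ₀ := hloc _ (by rw [abs_of_nonpos (by linarith)]; linarith)
  have hsin2a : 0 ≤ Real.sin (2 * a) :=
    Real.sin_nonneg_of_nonneg_of_le_pi (by linarith) (by linarith)
  have hsin2a1 : Real.sin (2 * a) ≤ 1 := Real.sin_le_one _
  -- sin (2ε) ≥ ε
  have hs : ε ≤ Real.sin (2 * ε) := by
    have := Real.sin_gt_sub_cube (x := 2 * ε) (by linarith)
    nlinarith [sq_nonneg ε]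
  have hspos : 0 < Real.sin (2 * ε) := lt_of_lt_of_le hε0 hs
  -- 1 - cos (2ε) ≤ 2ε²
  have hcos : 1 - Real.cos (2 * ε) ≤ 2 * ε ^ 2 := by
    have h1 : Real.cos (2 * ε) = 1 - 2 * Real.sin ε ^ 2 := by
      rw [Real.cos_two_mul, ← Real.sin_sq_add_cos_sq ε]; ring
    have h2 : Real.sin ε ≤ ε := Real.sin_le (le_of_lt hε0)
    have h3 : 0 ≤ Real.sin ε := Real.sin_nonneg_of_nonneg_of_le_pi (le_of_lt hε0) (by linarith)
    nlinarith
  -- combine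
  have hcosε1 : Real.cos (2 * ε) ≤ 1 := Real.cos_le_one _
  have hmono' : h (θ₀ - ε) * Real.sin (2 * a) ≤ h θ₀ * Real.sin (2 * a) :=
    mul_le_mul_of_nonneg_right hmono hsin2a
  have hmid : h θ₀ * Real.cos (2 * a) * Real.sin (2 * ε) ≤
      h (θ₀ + a) * Real.sin (2 * ε) + h θ₀ * Real.sin (2 * a) * (1 - Real.cos (2 * ε)) := by
    nlinarith [key, hmono']
  have hB : h θ₀ * Real.sin (2 * a) * (1 - Real.cos (2 * ε)) ≤ c * Real.sin (2 * ε) := by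
    rcases le_or_gt (h θ₀ * Real.sin (2 * a)) 0 with hneg | hpos
    · have : h θ₀ * Real.sin (2 * a) * (1 - Real.cos (2 * ε)) ≤ 0 :=
        mul_nonpos_of_nonpos_of_nonneg hneg (by linarith)
      nlinarith
    · have habs' : h θ₀ * Real.sin (2 * a) ≤ |h θ₀| := by
        calc h θ₀ * Real.sin (2 * a) ≤ |h θ₀| * Real.sin (2 * a) := by
              apply mul_le_mul_of_nonneg_right (le_abs_self _) hsin2a
          _ ≤ |h θ₀| * 1 := by apply mul_le_mul_of_nonneg_left hsin2a1 (abs_nonneg _)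
          _ = |h θ₀| := by ring
      have step1 : h θ₀ * Real.sin (2 * a) * (1 - Real.cos (2 * ε)) ≤ |h θ₀| * (2 * ε ^ 2) := by
        nlinarith
      have step2 : |h θ₀| * (2 * ε ^ 2) ≤ c * ε := by nlinarith [abs_nonneg (h θ₀)]
      have step3 : c * ε ≤ c * Real.sin (2 * ε) := mul_le_mul_of_nonneg_left hs (le_of_lt hc)
      linarith
  have final : h θ₀ * Real.cos (2 * a) * Real.sin (2 * ε) ≤
      (h (θ₀ + a) + c) * Real.sin (2 * ε) := by
    have expand : (h (θ₀ + a) + c) * Real.sin (2 * ε) =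
        h (θ₀ + a) * Real.sin (2 * ε) + c * Real.sin (2 * ε) := by ring
    linarith
  exact le_of_mul_le_mul_right final hspos

/-- If a 2-trigonometrically convex function h has a local maximum at θ₀, then
h(θ) ≥ h(θ₀)·cos(2(θ − θ₀)) for |θ − θ₀| ≤ π/4. -/
theorem trig_convex_local_max_bound (h : ℝ → ℝ)
    (hconv : ∀ θ₁ θ₂ θ₃ : ℝ, θ₁ < θ₂ → θ₂ < θ₃ → θ₃ - θ₁ < π / 2 →
      h θ₂ * Real.sin (2 * (θ₃ - θ₁)) ≤
        h θ₁ * Real.sin (2 * (θ₃ - θ₂)) + h θ₃ * Real.sin (2 * (θ₂ - θ₁)))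
    (θ₀ : ℝ) (hmax : IsLocalMax h θ₀) :
    ∀ θ : ℝ, |θ - θ₀| ≤ π / 4 → h θ₀ * Real.cos (2 * (θ - θ₀)) ≤ h θ := by
  obtain ⟨δ, hδ, hloc⟩ := Metric.eventually_nhds_iff.mp hmax
  have hloc' : ∀ x : ℝ, |x - θ₀| < δ → h x ≤ h θ₀ := fun x hx => hloc (by rwa [Real.dist_eq])
  intro θ hθ
  rcases lt_trichotomy θ θ₀ with hlt | heq | hgt
  · -- reflect
    set g : ℝ → ℝ := fun x => h (2 * θ₀ - x) with hg
    have hconv' : ∀ θ₁ θ₂ θ₃ : ℝ, θ₁ < θ₂ → θ₂ < θ₃ → θ₃ - θ₁ < π / 2 →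
        g θ₂ * Real.sin (2 * (θ₃ - θ₁)) ≤
          g θ₁ * Real.sin (2 * (θ₃ - θ₂)) + g θ₃ * Real.sin (2 * (θ₂ - θ₁)) := by
      intro t₁ t₂ t₃ h12 h23 h31
      have := hconv (2 * θ₀ - t₃) (2 * θ₀ - t₂) (2 * θ₀ - t₁)
        (by linarith) (by linarith) (by linarith)
      have e1 : 2 * θ₀ - t₁ - (2 * θ₀ - t₃) = t₃ - t₁ := by ring
      have e2 : 2 * θ₀ - t₁ - (2 * θ₀ - t₂) = t₂ - t₁ := by ring
      have e3 : 2 * θ₀ - t₂ - (2 * θ₀ - t₃) = t₃ - t₂ := by ring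
      rw [e1, e2, e3] at this
      simp only [hg]
      linarith
    have hloc'' : ∀ x : ℝ, |x - θ₀| < δ → g x ≤ g θ₀ := by
      intro x hx
      simp only [hg]
      have e : 2 * θ₀ - θ₀ = θ₀ := by ring
      rw [e]
      apply hloc'
      rw [show 2 * θ₀ - x - θ₀ = -(x - θ₀) by ring, abs_neg]
      exact hx
    have ha : 0 < θ₀ - θ := by linarith
    have ha2 : θ₀ - θ ≤ π / 4 := by
      rw [abs_of_nonpos (by linarith)] at hθ; linarith
    have := trig_core g hconv' θ₀ δ hδ hloc'' (θ₀ - θ) ha ha2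
    simp only [hg] at this
    rw [show 2 * θ₀ - θ₀ = θ₀ by ring, show 2 * θ₀ - (θ₀ + (θ₀ - θ)) = θ by ring] at this
    rw [show 2 * (θ - θ₀) = -(2 * (θ₀ - θ)) by ring, Real.cos_neg]
    exact this
  · subst heq
    simp
  · have ha2 : θ - θ₀ ≤ π / 4 := by rw [abs_of_nonneg (by linarith)] at hθ; linarith
    have := trig_core h hconv θ₀ δ hδ hloc' (θ - θ₀) (by linarith) ha2
    rwa [show θ₀ + (θ - θ₀) = θ by ring] at this
end

section
/- Let 0 ≤ θ₁ < θ₂ < ... < θ_n < 2π with θ_{n+1} = θ₁ + 2π and θ_{j+1} − θ_j ≤ π/2 for all j. Define the 2π-periodic function H(θ) by H(θ) = (π/2)·cos(2(θ_{j+1} − θ)) for θ'_j ≤ θ < θ'_{j+1}, where θ'_j = (θ_{j+1} + θ_j)/2 (midpoints). Then ∫₀^{2π} H(θ) dθ ≥ 2π, with equality when n = 4 and the θ_j are 0, π/2, π, 3π/2. -/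
open Real intervalIntegral

/-- For directions 0 ≤ θ₁ < ... < θ_n < 2π with gaps at most π/2 (extended
2π-periodically), the piecewise function H(θ) = (π/2)cos(2(θ_{j+1} − θ)) on
[(θ_j+θ_{j+1})/2, (θ_{j+1}+θ_{j+2})/2) satisfies ∫₀^{2π} H ≥ 2π, with equality
for the configuration 0, π/2, π, 3π/2. -/
theorem piecewise_cosine_integral_lower_bound (n : ℕ) (hn : 1 ≤ n) (θ : ℕ → ℝ)
    (h0 : 0 ≤ θ 1) (hlt : θ n < 2 * π)
    (hmono : ∀ j : ℕ, 1 ≤ j → j < n → θ j < θ (j + 1))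
    (hper : ∀ j : ℕ, 1 ≤ j → θ (j + n) = θ j + 2 * π)
    (hgap : ∀ j : ℕ, 1 ≤ j → j ≤ n → θ (j + 1) - θ j ≤ π / 2)
    (H : ℝ → ℝ) (hHper : Function.Periodic H (2 * π))
    (hH : ∀ j : ℕ, 1 ≤ j → j ≤ n → ∀ t : ℝ,
      (θ j + θ (j + 1)) / 2 ≤ t → t < (θ (j + 1) + θ (j + 2)) / 2 →
      H t = π / 2 * Real.cos (2 * (θ (j + 1) - t))) :
    (2 * π ≤ ∫ t in (0:ℝ)..(2 * π), H t) ∧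
    ((n = 4 ∧ θ 1 = 0 ∧ θ 2 = π / 2 ∧ θ 3 = π ∧ θ 4 = 3 * π / 2) →
      (∫ t in (0:ℝ)..(2 * π), H t) = 2 * π) := by
  have hpi := Real.pi_pos
  have hθn1 : θ (n + 1) = θ 1 + 2 * π := by
    have := hper 1 le_rfl; rwa [Nat.add_comm] at this
  have hθn2 : θ (n + 2) = θ 2 + 2 * π := by
    have := hper 2 (by norm_num); rwa [Nat.add_comm] at this
  -- positivity of gaps
  have gpos : ∀ j : ℕ, 1 ≤ j → j ≤ n → 0 < θ (j + 1) - θ j := by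
    intro j h1 h2
    rcases lt_or_eq_of_le h2 with h | h
    · linarith [hmono j h1 h]
    · subst h; rw [hθn1]; linarith
  have g1eq : θ (n + 2) - θ (n + 1) = θ 2 - θ 1 := by rw [hθn1, hθn2]; ring
  -- midpoints
  set m : ℕ → ℝ := fun k => (θ (k + 1) + θ (k + 2)) / 2 with hm
  have hmn : m n = m 0 + 2 * π := by simp only [hm, hθn1, hθn2]; ring
  -- gap at index k+2 is positive for k < n
  have gpos' : ∀ k : ℕ, k < n → 0 < θ (k + 3) - θ (k + 2) := by
    intro k hk
    rcases lt_or_eq_of_le (Nat.succ_le_of_lt hk) with h | h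
    · have := gpos (k + 2) (by omega) (by omega)
      simpa [show k + 2 + 1 = k + 3 from rfl] using this
    · have hk2 : k + 2 = n + 1 := by omega
      have hk3 : k + 3 = n + 2 := by omega
      rw [hk2, hk3, g1eq]
      exact gpos 1 le_rfl hn
  have hmlt : ∀ k : ℕ, k < n → m k < m (k + 1) := by
    intro k hk
    have h1 := gpos (k + 1) (by omega) hk
    have h2 := gpos' k hk
    simp only [hm, show k + 1 + 1 = k + 2 from rfl, show k + 1 + 2 = k + 3 from rfl] at *
    linarith
  -- piecewise values: on each piece H agrees a.e. with a cosine
  have key : ∀ k : ℕ, k < n →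
      IntervalIntegrable H MeasureTheory.volume (m k) (m (k + 1)) ∧
      (∫ t in m k..m (k + 1), H t)
        = π / 4 * (Real.sin (θ (k + 2) - θ (k + 1)) + Real.sin (θ (k + 3) - θ (k + 2))) := by
    intro k hk
    set c : ℝ := θ (k + 2) with hc
    set f : ℝ → ℝ := fun t => π / 2 * Real.cos (2 * (c - t)) with hf
    have hfc : Continuous f := by fun_prop
    have hle := (hmlt k hk).le
    have hsing : ∀ᵐ t : ℝ, t ≠ m (k + 1) := by
      rw [MeasureTheory.ae_iff]
      simp [not_not, Set.setOf_eq_eq_singleton, Real.volume_singleton]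
    have hae : ∀ᵐ t : ℝ, t ∈ Set.uIoc (m k) (m (k + 1)) → H t = f t := by
      filter_upwards [hsing] with t ht hmem
      rw [Set.uIoc_of_le hle] at hmem
      have := hH (k + 1) (by omega) hk t
      simp only [show k + 1 + 1 = k + 2 from rfl, show k + 1 + 2 = k + 3 from rfl] at this
      exact this hmem.1.le (lt_of_le_of_ne hmem.2 ht)
    have hint : IntervalIntegrable H MeasureTheory.volume (m k) (m (k + 1)) := by
      refine (hfc.intervalIntegrable _ _).congr_ae ?_
      refine (MeasureTheory.ae_restrict_iff' measurableSet_uIoc).mpr ?_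
      filter_upwards [hae] with t ht hmem
      exact (ht hmem).symm
    refine ⟨hint, ?_⟩
    rw [intervalIntegral.integral_congr_ae hae]
    have hderiv : ∀ t ∈ Set.uIcc (m k) (m (k + 1)),
        HasDerivAt (fun t => π / 4 * Real.sin (2 * (t - c))) (f t) t := by
      intro t _
      have h1 : HasDerivAt (fun t : ℝ => 2 * (t - c)) 2 t := by
        simpa using ((hasDerivAt_id t).sub_const c).const_mul (2 : ℝ)
      have h2 := (Real.hasDerivAt_sin (2 * (t - c))).comp t h1
      have h3 := h2.const_mul (π / 4)
      refine HasDerivAt.congr_deriv h3 ?_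
      show _ = π / 2 * Real.cos (2 * (c - t))
      rw [show (2 : ℝ) * (c - t) = -(2 * (t - c)) by ring, Real.cos_neg]
      ring
    rw [intervalIntegral.integral_eq_sub_of_hasDerivAt hderiv (hfc.intervalIntegrable _ _)]
    have e1 : 2 * (m (k + 1) - c) = θ (k + 3) - θ (k + 2) := by
      simp only [hm, hc, show k + 1 + 1 = k + 2 from rfl, show k + 1 + 2 = k + 3 from rfl]; ring
    have e2 : 2 * (m k - c) = -(θ (k + 2) - θ (k + 1)) := by
      simp only [hm, hc]; ring
    rw [e1, e2, Real.sin_neg]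
    ring
  -- total integral = (π/2) * Σ sin(gaps)
  have hsum : (∫ t in (0:ℝ)..(2 * π), H t)
      = ∑ k ∈ Finset.range n,
          (π / 4 * (Real.sin (θ (k + 2) - θ (k + 1)) + Real.sin (θ (k + 3) - θ (k + 2)))) := by
    have hshift : (∫ t in (0:ℝ)..(2 * π), H t) = ∫ t in (m 0)..(m 0 + 2 * π), H t := by
      simpa using hHper.intervalIntegral_add_eq 0 (m 0)
    rw [hshift, ← hmn,
      ← intervalIntegral.sum_integral_adjacent_intervals (fun k hk => (key k hk).1)]
    exact Finset.sum_congr rfl fun k hk => (key k (Finset.mem_range.mp hk)).2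
  -- symmetrize the sum
  set A : ℝ := ∑ k ∈ Finset.range n, Real.sin (θ (k + 2) - θ (k + 1)) with hA
  have hBA : (∑ k ∈ Finset.range n, Real.sin (θ (k + 3) - θ (k + 2))) = A := by
    have h2 : (∑ k ∈ Finset.range (n + 1), Real.sin (θ (k + 2) - θ (k + 1)))
        = (∑ k ∈ Finset.range n, Real.sin (θ (k + 3) - θ (k + 2)))
          + Real.sin (θ 2 - θ 1) :=
      Finset.sum_range_succ' (fun k => Real.sin (θ (k + 2) - θ (k + 1))) n
    have h1 : (∑ k ∈ Finset.range (n + 1), Real.sin (θ (k + 2) - θ (k + 1)))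
        = A + Real.sin (θ (n + 2) - θ (n + 1)) :=
      Finset.sum_range_succ _ n
    rw [g1eq] at h1
    linarith
  have htotal : (∫ t in (0:ℝ)..(2 * π), H t) = π / 2 * A := by
    rw [hsum]
    have : ∀ k ∈ Finset.range n,
        π / 4 * (Real.sin (θ (k + 2) - θ (k + 1)) + Real.sin (θ (k + 3) - θ (k + 2)))
        = π / 4 * Real.sin (θ (k + 2) - θ (k + 1)) + π / 4 * Real.sin (θ (k + 3) - θ (k + 2)) :=
      fun k _ => by ring
    rw [Finset.sum_congr rfl this, Finset.sum_add_distrib, ← Finset.mul_sum, ← Finset.mul_sum,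
      hBA, ← hA]
    ring
  constructor
  · -- lower bound
    have htel : ∑ k ∈ Finset.range n, (θ (k + 2) - θ (k + 1)) = θ (n + 1) - θ 1 := by
      have := Finset.sum_range_sub (fun i => θ (i + 1)) n
      simpa [show ∀ k : ℕ, k + 1 + 1 = k + 2 from fun k => rfl] using this
    have hterm : ∀ k ∈ Finset.range n,
        2 / π * (θ (k + 2) - θ (k + 1)) ≤ Real.sin (θ (k + 2) - θ (k + 1)) := by
      intro k hk
      have hk' := Finset.mem_range.mp hk
      have hg := gpos (k + 1) (by omega) hk'
      have hg' := hgap (k + 1) (by omega) hk'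
      simp only [show k + 1 + 1 = k + 2 from rfl] at hg hg'
      exact Real.mul_le_sin hg.le hg'
    have h4A : (4 : ℝ) ≤ A := by
      have := Finset.sum_le_sum hterm
      rw [← Finset.mul_sum, htel, hθn1] at this
      have h2π : 2 / π * (θ 1 + 2 * π - θ 1) = 4 := by field_simp; ring
      rw [h2π] at this
      exact this
    rw [htotal]
    nlinarith
  · -- equality case
    rintro ⟨hn4, h1, h2, h3, h4⟩
    subst hn4
    have h5 : θ 5 = θ 1 + 2 * π := hθn1
    rw [htotal, hA]
    rw [Finset.sum_range_succ, Finset.sum_range_succ, Finset.sum_range_succ,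
      Finset.sum_range_succ, Finset.sum_range_zero]
    have e0 : θ 2 - θ 1 = π / 2 := by rw [h1, h2]; ring
    have e1 : θ 3 - θ 2 = π / 2 := by rw [h2, h3]; ring
    have e2 : θ 4 - θ 3 = π / 2 := by rw [h3, h4]; ring
    have e3 : θ 5 - θ 4 = π / 2 := by rw [h5, h4, h1]; ring
    norm_num
    rw [e0, e1, e2, e3, Real.sin_pi_div_two]
    ring
end
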